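/- Let (Ω,ℱ) be a measurable space, 𝒳 a countable set with the discrete σ-algebra, X₀, X₁ : Ω → 𝒳 measurable, and P, R probability measures on Ω. Suppose supp P₀₁ ⊆ supp R₀₁ and that there exists h : 𝒳×𝒳 → [0,∞) such that for every x with P₀(x) > 0 one has P^x(A) = ∫_A h(x,X₁) dR^x for every A ∈ ℱ. Then P^{xy} = R^{xy} for every (x,y) ∈ supp P₀₁. -/

import Mathlib

open MeasureTheory ProbabilityTheory
open scoped NNReal ENNReal

/-- If `supp P₀₁ ⊆ supp R₀₁` and there exists `h : 𝒳 × 𝒳 → [0,∞)` such that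
`P^x = h(x, X₁)·R^x` for every `x` with `P₀(x) > 0`, then `P^{xy} = R^{xy}` for every
`(x,y) ∈ supp P₀₁`. -/
theorem stmt17 {Ω : Type*} [MeasurableSpace Ω] {𝒳 : Type*} [MeasurableSpace 𝒳]
    [MeasurableSingletonClass 𝒳] [Countable 𝒳]
    (X₀ X₁ : Ω → 𝒳) (hX₀ : Measurable X₀) (hX₁ : Measurable X₁)
    (P R : Measure Ω) [IsProbabilityMeasure P] [IsProbabilityMeasure R]
    (hsupp : ∀ x y : 𝒳, 0 < P {ω | X₀ ω = x ∧ X₁ ω = y} →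
      0 < R {ω | X₀ ω = x ∧ X₁ ω = y})
    (h : 𝒳 → 𝒳 → ℝ≥0)
    (hh : ∀ x : 𝒳, 0 < P {ω | X₀ ω = x} → ∀ A : Set Ω, MeasurableSet A →
      ProbabilityTheory.cond P {ω | X₀ ω = x} A =
        ∫⁻ ω in A, (h x (X₁ ω) : ℝ≥0∞) ∂(ProbabilityTheory.cond R {ω | X₀ ω = x})) :
    ∀ x y : 𝒳, 0 < P {ω | X₀ ω = x ∧ X₁ ω = y} →
      ProbabilityTheory.cond P {ω | X₀ ω = x ∧ X₁ ω = y} =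
        ProbabilityTheory.cond R {ω | X₀ ω = x ∧ X₁ ω = y} := by
  intro x y hP
  set S : Set Ω := {ω | X₀ ω = x} with hSdef
  set T : Set Ω := {ω | X₁ ω = y} with hTdef
  have hE : {ω | X₀ ω = x ∧ X₁ ω = y} = S ∩ T := rfl
  rw [hE] at hP ⊢
  have hSmeas : MeasurableSet S := hX₀ (measurableSet_singleton x)
  have hTmeas : MeasurableSet T := hX₁ (measurableSet_singleton y)
  have hEmeas : MeasurableSet (S ∩ T) := hSmeas.inter hTmeas
  have hPS : 0 < P S := lt_of_lt_of_le hP (measure_mono Set.inter_subset_left)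
  have hRE : 0 < R (S ∩ T) := by
    have := hsupp x y (by rwa [hE])
    rwa [hE] at this
  have hRS : 0 < R S := lt_of_lt_of_le hRE (measure_mono Set.inter_subset_left)
  have hPSne : P S ≠ 0 := hPS.ne'
  have hPStop : P S ≠ ∞ := (measure_lt_top P S).ne
  have hRSne : R S ≠ 0 := hRS.ne'
  have hRStop : R S ≠ ∞ := (measure_lt_top R S).ne
  set c : ℝ≥0∞ := P S * ((h x y : ℝ≥0∞) * (R S)⁻¹) with hcdef
  -- key computation
  have key : ∀ A : Set Ω, MeasurableSet A →
      P ((S ∩ T) ∩ A) = c * R ((S ∩ T) ∩ A) := by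
    intro A hA
    have h1 : ProbabilityTheory.cond P S (T ∩ A) =
        ∫⁻ ω in T ∩ A, (h x (X₁ ω) : ℝ≥0∞) ∂(ProbabilityTheory.cond R S) :=
      hh x hPS (T ∩ A) (hTmeas.inter hA)
    have h2 : ∫⁻ ω in T ∩ A, (h x (X₁ ω) : ℝ≥0∞) ∂(ProbabilityTheory.cond R S)
        = (h x y : ℝ≥0∞) * ProbabilityTheory.cond R S (T ∩ A) := by
      rw [setLIntegral_congr_fun (hTmeas.inter hA)
        (fun ω hω => by
          simp only [hTdef, Set.mem_inter_iff, Set.mem_setOf_eq] at hω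
          rw [hω.1])]
      rw [setLIntegral_const]
    have h3 : ProbabilityTheory.cond P S (T ∩ A) = (P S)⁻¹ * P (S ∩ (T ∩ A)) :=
      cond_apply hSmeas P (T ∩ A)
    have h4 : ProbabilityTheory.cond R S (T ∩ A) = (R S)⁻¹ * R (S ∩ (T ∩ A)) :=
      cond_apply hSmeas R (T ∩ A)
    have h5 : (P S)⁻¹ * P (S ∩ (T ∩ A)) =
        (h x y : ℝ≥0∞) * ((R S)⁻¹ * R (S ∩ (T ∩ A))) := by
      rw [← h3, ← h4, h1, h2]
    have h6 : P (S ∩ (T ∩ A)) = P S * ((P S)⁻¹ * P (S ∩ (T ∩ A))) := by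
      rw [← mul_assoc, ENNReal.mul_inv_cancel hPSne hPStop, one_mul]
    rw [Set.inter_assoc, h6, h5, hcdef]
    ring
  have hEc : P (S ∩ T) = c * R (S ∩ T) := by
    have := key Set.univ MeasurableSet.univ
    simpa using this
  have hcne : c ≠ 0 := by
    intro h0
    rw [hEc, h0, zero_mul] at hP
    exact lt_irrefl _ hP
  have hctop : c ≠ ∞ := by
    rw [hcdef]
    exact ENNReal.mul_ne_top hPStop
      (ENNReal.mul_ne_top ENNReal.coe_ne_top (ENNReal.inv_ne_top.mpr hRSne))
  ext A hA
  rw [cond_apply hEmeas P A, cond_apply hEmeas R A, hEc, key A hA,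
    ENNReal.mul_inv (Or.inl hcne) (Or.inl hctop)]
  rw [mul_comm c⁻¹ _, mul_assoc, ← mul_assoc c⁻¹ c _, ENNReal.inv_mul_cancel hcne hctop,
    one_mul]
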